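/- arXiv:2601.12077 — 2 statements merged into one kernel-verified Lean document; each statement's English description precedes it below -/
import Mathlib

section
/- Lemma 2.3 (variation of the unit normal under boundary perturbation): Let n ≥ 1. Let φ : ℝⁿ → ℝ be C² and let U ⊆ ℝⁿ be an open set on which ‖∇φ(x)‖ = 1; write ν = ∇φ. Let ε > 0 and let h : ℝⁿ × (−ε, ε) → ℝⁿ be C² with h(x, 0) = x for all x ∈ ℝⁿ, and suppose that for every (x, t) the partial Fréchet derivative D_x h(x, t) : ℝⁿ → ℝⁿ (derivative in the first variable) is invertible. Let g : ℝⁿ × (−ε, ε) → ℝⁿ be C¹ with g(h(x, t), t) = x for all (x, t). Set ḣ(x) = ∂_t h(x, 0) and define σ : ℝⁿ → ℝ by σ(x) = ⟨ḣ(x), ν(x)⟩. For (x, t) with ν(x) ≠ 0 define N(x, t) = w(x, t)/‖w(x, t)‖, where w(x, t) = ((D_x h(x, t))^*)⁻¹(ν(x)) and * denotes the adjoint with respect to the Euclidean inner product. Then for every x ∈ U, the curve t ↦ N(g(x, t), t), which is defined for all t in a neighborhood of 0, is differentiable at t = 0 and its derivative at t = 0 equals −(∇σ(x) − ⟨∇σ(x),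 ν(x)⟩ ν(x)), that is, minus the tangential gradient of σ relative to the level set of φ through x. -/
open Set
open scoped RealInnerProductSpace

private lemma hasDerivAt_ring_inverse_comp {R : Type*} [NormedRing R] [NormedAlgebra ℝ R]
    [CompleteSpace R] {B : ℝ → R} {B' : R} (hB : HasDerivAt B B' 0) (hB0 : B 0 = 1) :
    HasDerivAt (fun t => Ring.inverse (B t)) (-B') 0 := by
  have h1 := HasFDerivAt.comp_hasDerivAt_of_eq 0
    (hasFDerivAt_ringInverse (𝕜 := ℝ) (1 : Rˣ)) hB (by rw [hB0, Units.val_one])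
  simpa [ContinuousLinearMap.mulLeftRight_apply, Function.comp_def] using h1

set_option maxHeartbeats 1000000 in
set_option synthInstance.maxHeartbeats 400000 in
/-- Lemma 2.3: variation of the unit normal under boundary perturbation.
With `ν = ∇φ` of unit length on `U`, a perturbation family `h(·,t)` with
`h(·,0) = id` and invertible partial Jacobians, `g(·,t)` the inverse family,
`ḣ(x) = ∂ₜ h(x,0)`, `σ = ⟪ḣ, ν⟫` and
`N(x,t) = ((Dₓh(x,t))^*)⁻¹ ν(x) / ‖((Dₓh(x,t))^*)⁻¹ ν(x)‖` the perturbed unit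
normal, the curve `t ↦ N(g(x,t),t)` is differentiable at `t = 0` with
derivative `−(∇σ(x) − ⟪∇σ(x), ν(x)⟫ ν(x))`, the negative tangential gradient
of `σ`. -/
theorem variation_of_unit_normal
    {n : ℕ} (hn : 1 ≤ n)
    (φ : EuclideanSpace ℝ (Fin n) → ℝ) (hφ : ContDiff ℝ 2 φ)
    (U : Set (EuclideanSpace ℝ (Fin n))) (hU : IsOpen U)
    (hunit : ∀ x ∈ U, ‖gradient φ x‖ = 1)
    (ε : ℝ) (hε : 0 < ε)
    (h : EuclideanSpace ℝ (Fin n) × ℝ → EuclideanSpace ℝ (Fin n))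
    (hh : ContDiffOn ℝ 2 h (Set.univ ×ˢ Set.Ioo (-ε) ε))
    (hh0 : ∀ x, h (x, 0) = x)
    (hinv : ∀ x t, IsUnit (fderiv ℝ (fun x' => h (x', t)) x))
    (g : EuclideanSpace ℝ (Fin n) × ℝ → EuclideanSpace ℝ (Fin n))
    (hg : ContDiffOn ℝ 1 g (Set.univ ×ˢ Set.Ioo (-ε) ε))
    (hgh : ∀ x, ∀ t ∈ Set.Ioo (-ε) ε, g (h (x, t), t) = x)
    (hdot : EuclideanSpace ℝ (Fin n) → EuclideanSpace ℝ (Fin n))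
    (hhdot : ∀ x, hdot x = deriv (fun t => h (x, t)) 0)
    (σ : EuclideanSpace ℝ (Fin n) → ℝ)
    (hσ : ∀ x, σ x = ⟪hdot x, gradient φ x⟫)
    (w : EuclideanSpace ℝ (Fin n) × ℝ → EuclideanSpace ℝ (Fin n))
    (hw : ∀ p, w p =
      Ring.inverse (ContinuousLinearMap.adjoint (fderiv ℝ (fun x' => h (x', p.2)) p.1))
        (gradient φ p.1))
    (N : EuclideanSpace ℝ (Fin n) × ℝ → EuclideanSpace ℝ (Fin n))
    (hN : ∀ p, gradient φ p.1 ≠ 0 → N p = ‖w p‖⁻¹ • w p) :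
    ∀ x ∈ U,
      HasDerivAt (fun t => N (g (x, t), t))
        (-(gradient σ x - ⟪gradient σ x, gradient φ x⟫ • gradient φ x)) 0 := by
  intro x hx
  -- basic membership facts
  have h0mem : (0 : ℝ) ∈ Set.Ioo (-ε) ε := ⟨by linarith, hε⟩
  have hΩo : IsOpen ((Set.univ : Set (EuclideanSpace ℝ (Fin n))) ×ˢ Set.Ioo (-ε) ε) := isOpen_univ.prod isOpen_Ioo
  have hmemΩ : ∀ (y : (EuclideanSpace ℝ (Fin n))), ∀ t ∈ Set.Ioo (-ε) ε,
      ((y, t) : (EuclideanSpace ℝ (Fin n)) × ℝ) ∈ (Set.univ : Set (EuclideanSpace ℝ (Fin n))) ×ˢ Set.Ioo (-ε) ε := by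
    intro y t ht; exact ⟨trivial, ht⟩
  have hhAt : ∀ (y : (EuclideanSpace ℝ (Fin n))), ∀ t ∈ Set.Ioo (-ε) ε, ContDiffAt ℝ 2 h (y, t) := by
    intro y t ht; exact hh.contDiffAt (hΩo.mem_nhds (hmemΩ y t ht))
  -- differentiability of h at points of the domain
  have hDh : ∀ (y : (EuclideanSpace ℝ (Fin n))), ∀ t ∈ Set.Ioo (-ε) ε, HasFDerivAt h (fderiv ℝ h (y, t)) (y, t) := by
    intro y t ht
    exact ((hhAt y t ht).differentiableAt two_ne_zero).hasFDerivAt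
  -- curve t ↦ (y, t)
  have hcurve : ∀ (y : (EuclideanSpace ℝ (Fin n))), HasDerivAt (fun t : ℝ => ((y, t) : (EuclideanSpace ℝ (Fin n)) × ℝ)) ((0 : (EuclideanSpace ℝ (Fin n))), (1 : ℝ)) 0 :=
    fun y => HasDerivAt.prodMk (hasDerivAt_const 0 y) (hasDerivAt_id 0)
  -- t ↦ h (y, t) has derivative fderiv h (y,0) (0,1) at 0
  have hxt : ∀ (y : (EuclideanSpace ℝ (Fin n))), HasDerivAt (fun t => h (y, t)) (fderiv ℝ h (y, 0) (0, 1)) 0 :=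
    fun y => (hDh y 0 h0mem).comp_hasDerivAt 0 (hcurve y)
  have hdot_eq : ∀ (y : (EuclideanSpace ℝ (Fin n))), hdot y = fderiv ℝ h (y, 0) (0, 1) :=
    fun y => (hhdot y).trans (hxt y).deriv
  -- the injection J : E →L (EuclideanSpace ℝ (Fin n)) × ℝ
  set J : (EuclideanSpace ℝ (Fin n)) →L[ℝ] (EuclideanSpace ℝ (Fin n)) × ℝ := (ContinuousLinearMap.id ℝ (EuclideanSpace ℝ (Fin n))).prod 0 with hJ
  have hJapp : ∀ v : (EuclideanSpace ℝ (Fin n)), J v = (v, (0:ℝ)) := fun v => rfl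
  have hinj : ∀ (t : ℝ) (y : (EuclideanSpace ℝ (Fin n))), HasFDerivAt (fun x' : (EuclideanSpace ℝ (Fin n)) => ((x', t) : (EuclideanSpace ℝ (Fin n)) × ℝ)) J y :=
    fun t y => HasFDerivAt.prodMk (hasFDerivAt_id y) (hasFDerivAt_const t y)
  -- partial derivative in x equals full derivative composed with J
  have hpart : ∀ (y : (EuclideanSpace ℝ (Fin n))), ∀ t ∈ Set.Ioo (-ε) ε,
      HasFDerivAt (fun x' => h (x', t)) ((fderiv ℝ h (y, t)).comp J) y :=
    fun y t ht => (hDh y t ht).comp y (hinj t y)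
  -- at t = 0, the x-partial derivative is the identity
  have hid0 : (fun x' : (EuclideanSpace ℝ (Fin n)) => h (x', 0)) = id := funext hh0
  have hDh0 : ∀ y : (EuclideanSpace ℝ (Fin n)), (fderiv ℝ h (y, 0)).comp J = ContinuousLinearMap.id ℝ (EuclideanSpace ℝ (Fin n)) := by
    intro y
    exact (hpart y 0 h0mem).unique (hid0 ▸ hasFDerivAt_id y)
  -- second derivative of h at (x,0)
  set D2 := fderiv ℝ (fderiv ℝ h) (x, 0) with hD2def
  have hD2 : HasFDerivAt (fderiv ℝ h) D2 (x, 0) := by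
    have h1 : ContDiffAt ℝ 1 (fderiv ℝ h) (x, 0) :=
      (hhAt x 0 h0mem).fderiv_right (le_refl 2)
    exact (h1.differentiableAt one_ne_zero).hasFDerivAt
  have hsym : ∀ a b : (EuclideanSpace ℝ (Fin n)) × ℝ, D2 a b = D2 b a := by
    have := (hhAt x 0 h0mem).isSymmSndFDerivAt (by simp)
    exact this

  -- postcomposition with J as a continuous linear map
  set compJ : ((EuclideanSpace ℝ (Fin n)) × ℝ →L[ℝ] (EuclideanSpace ℝ (Fin n))) →L[ℝ]
      ((EuclideanSpace ℝ (Fin n)) →L[ℝ] (EuclideanSpace ℝ (Fin n))) :=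
    (ContinuousLinearMap.compL ℝ (EuclideanSpace ℝ (Fin n)) ((EuclideanSpace ℝ (Fin n)) × ℝ)
      (EuclideanSpace ℝ (Fin n))).flip J with hcompJ
  have hcompJapp : ∀ (T : (EuclideanSpace ℝ (Fin n)) × ℝ →L[ℝ] (EuclideanSpace ℝ (Fin n))),
      compJ T = T.comp J := fun T => rfl
  -- derivative of y ↦ fderiv h (y, 0)
  have hDh0curve : HasFDerivAt (fun y : (EuclideanSpace ℝ (Fin n)) => fderiv ℝ h (y, 0))
      (D2.comp J) x := hD2.comp x (hinj 0 x)
  -- pure second x-derivatives vanish at t = 0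
  have hzero : ∀ u v : (EuclideanSpace ℝ (Fin n)), D2 (u, (0:ℝ)) (v, (0:ℝ)) = 0 := by
    have hY : HasFDerivAt (fun y : (EuclideanSpace ℝ (Fin n)) => compJ (fderiv ℝ h (y, 0)))
        (compJ.comp (D2.comp J)) x := compJ.hasFDerivAt.comp x hDh0curve
    have hYconst : (fun y : (EuclideanSpace ℝ (Fin n)) => compJ (fderiv ℝ h (y, 0)))
        = fun _ => ContinuousLinearMap.id ℝ (EuclideanSpace ℝ (Fin n)) := by
      funext y; rw [hcompJapp, hDh0 y]
    have hY0 := hasFDerivAt_const (𝕜 := ℝ) (ContinuousLinearMap.id ℝ (EuclideanSpace ℝ (Fin n))) x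
    rw [← hYconst] at hY0
    have hcz : compJ.comp (D2.comp J) = 0 := hY.unique hY0
    intro u v
    have h1 : (compJ.comp (D2.comp J)) u v = 0 := by rw [hcz]; rfl
    simpa [hcompJapp, hJapp] using h1
  -- basic facts about g
  have hg0 : ∀ y, g (y, 0) = y := fun y => by have := hgh y 0 h0mem; rwa [hh0] at this
  have hgd : HasFDerivAt g (fderiv ℝ g (x, 0)) (x, 0) :=
    ((hg.contDiffAt (hΩo.mem_nhds (hmemΩ x 0 h0mem))).differentiableAt one_ne_zero).hasFDerivAt
  set Dg := fderiv ℝ g (x, 0) with hDgdef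
  have hγ0 : HasDerivAt (fun t => g (x, t)) (Dg ((0 : EuclideanSpace ℝ (Fin n)), (1:ℝ))) 0 :=
    hgd.comp_hasDerivAt 0 (hcurve x)
  have hDgv : ∀ v : (EuclideanSpace ℝ (Fin n)), Dg (v, (0:ℝ)) = v := by
    have h1 : HasFDerivAt (fun y => g (y, 0)) (Dg.comp J) x := hgd.comp x (hinj 0 x)
    have h2 : (fun y : (EuclideanSpace ℝ (Fin n)) => g (y, 0)) = id := funext hg0
    have h3 : Dg.comp J = ContinuousLinearMap.id ℝ (EuclideanSpace ℝ (Fin n)) :=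
      h1.unique (h2 ▸ hasFDerivAt_id x)
    intro v
    have := ContinuousLinearMap.ext_iff.1 h3 v
    simpa [hJapp] using this
  have hker : Dg (hdot x, (1:ℝ)) = 0 := by
    have hcv : HasDerivAt (fun t : ℝ => ((h (x, t), t) : (EuclideanSpace ℝ (Fin n)) × ℝ))
        ((hdot x), (1:ℝ)) 0 := by
      have h1 := hxt x; rw [← hdot_eq x] at h1; exact HasDerivAt.prodMk h1 (hasDerivAt_id 0)
    have hch : HasDerivAt (fun t => g (h (x, t), t)) (Dg (hdot x, 1)) 0 :=
      HasFDerivAt.comp_hasDerivAt_of_eq 0 hgd hcv (by rw [hh0 x])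
    have heq : (fun t => g (h (x, t), t)) =ᶠ[nhds (0:ℝ)] fun _ => x := by
      filter_upwards [Ioo_mem_nhds h0mem.1 h0mem.2] with t ht using hgh x t ht
    have hc0 : HasDerivAt (fun t => g (h (x, t), t)) 0 0 :=
      (hasDerivAt_const (0:ℝ) x).congr_of_eventuallyEq heq
    exact hch.unique hc0
  have hγ' : HasDerivAt (fun t => g (x, t)) (-(hdot x)) 0 := by
    have e : ((0 : EuclideanSpace ℝ (Fin n)), (1:ℝ)) = (hdot x, (1:ℝ)) - (hdot x, (0:ℝ)) := by
      simp
    have : Dg ((0 : EuclideanSpace ℝ (Fin n)), (1:ℝ)) = -(hdot x) := by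
      rw [e, map_sub, hker, hDgv]; simp
    rwa [this] at hγ0

  -- the curve γ
  set γ : ℝ → EuclideanSpace ℝ (Fin n) := fun t => g (x, t) with hγdef
  have hγ0' : γ 0 = x := hg0 x
  have hpcurve : HasDerivAt (fun t => ((γ t, t) : (EuclideanSpace ℝ (Fin n)) × ℝ))
      (-(hdot x), (1:ℝ)) 0 := HasDerivAt.prodMk hγ' (hasDerivAt_id 0)
  have hDhcurve : HasDerivAt (fun t => fderiv ℝ h (γ t, t)) (D2 (-(hdot x), 1)) 0 :=
    HasFDerivAt.comp_hasDerivAt_of_eq 0 hD2 hpcurve (by rw [hγ0'])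
  -- L is the derivative of hdot at x
  set L : (EuclideanSpace ℝ (Fin n)) →L[ℝ] (EuclideanSpace ℝ (Fin n)) :=
    ((ContinuousLinearMap.apply ℝ (EuclideanSpace ℝ (Fin n))
      (((0 : EuclideanSpace ℝ (Fin n)), (1:ℝ)))).comp (D2.comp J)) with hLdef
  have hLapp : ∀ v, L v = D2 (v, (0:ℝ)) ((0 : EuclideanSpace ℝ (Fin n)), (1:ℝ)) := fun v => rfl
  have hhd : HasFDerivAt hdot L x := by
    have h1 : HasFDerivAt (fun y : EuclideanSpace ℝ (Fin n) => fderiv ℝ h (y, 0) (0, 1)) L x :=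
      (ContinuousLinearMap.apply ℝ (EuclideanSpace ℝ (Fin n))
        ((0 : EuclideanSpace ℝ (Fin n)), (1:ℝ))).hasFDerivAt.comp x hDh0curve
    have h2 : hdot = fun y => fderiv ℝ h (y, 0) (0, 1) := funext hdot_eq
    rw [h2]; exact h1
  -- derivative of the moving partial jacobian
  have hAq : HasDerivAt (fun t => (fderiv ℝ h (γ t, t)).comp J)
      ((D2 (-(hdot x), 1)).comp J) 0 := by
    have h1 := compJ.hasFDerivAt.comp_hasDerivAt 0 hDhcurve
    exact h1
  have hderiv_eq : (D2 (-(hdot x), (1:ℝ))).comp J = L := by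
    refine ContinuousLinearMap.ext fun v => ?_
    have e1 : (D2 (-(hdot x), (1:ℝ))) (v, (0:ℝ)) = D2 (v, (0:ℝ)) (-(hdot x), (1:ℝ)) := hsym _ _
    have e2 : ((-(hdot x), (1:ℝ)) : (EuclideanSpace ℝ (Fin n)) × ℝ)
        = (-(hdot x), (0:ℝ)) + ((0 : EuclideanSpace ℝ (Fin n)), (1:ℝ)) := by simp
    have e3 : D2 (v, (0:ℝ)) (-(hdot x), (1:ℝ)) = L v := by
      rw [e2, map_add, hzero v (-(hdot x)), hLapp v, zero_add]
    show (D2 (-(hdot x), (1:ℝ))) (J v) = L v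
    rw [hJapp v, e1, e3]
  have hAev : (fun t => fderiv ℝ (fun x' => h (x', t)) (γ t)) =ᶠ[nhds (0:ℝ)]
      (fun t => (fderiv ℝ h (γ t, t)).comp J) := by
    filter_upwards [Ioo_mem_nhds h0mem.1 h0mem.2] with t ht
    exact (hpart (γ t) t ht).fderiv
  have hA : HasDerivAt (fun t => fderiv ℝ (fun x' => h (x', t)) (γ t)) L 0 := by
    rw [← hderiv_eq]; exact hAq.congr_of_eventuallyEq hAev
  have hA0 : fderiv ℝ (fun x' => h (x', 0)) (γ 0)
      = ContinuousLinearMap.id ℝ (EuclideanSpace ℝ (Fin n)) := by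
    rw [hid0, fderiv_id]
  -- adjoint as a continuous linear map
  set adjL : ((EuclideanSpace ℝ (Fin n)) →L[ℝ] (EuclideanSpace ℝ (Fin n))) →L[ℝ]
      ((EuclideanSpace ℝ (Fin n)) →L[ℝ] (EuclideanSpace ℝ (Fin n))) :=
    LinearMap.mkContinuous
      { toFun := fun T => ContinuousLinearMap.adjoint T
        map_add' := fun a b => map_add _ a b
        map_smul' := fun c a => by
          refine ContinuousLinearMap.ext fun u => ?_
          refine ext_inner_right ℝ fun v => ?_
          simp only [RingHom.id_apply, ContinuousLinearMap.smul_apply,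
            ContinuousLinearMap.adjoint_inner_left, real_inner_smul_left,
            real_inner_smul_right] }
      1 (fun T => by
        show ‖ContinuousLinearMap.adjoint T‖ ≤ 1 * ‖T‖
        rw [one_mul]
        exact le_of_eq (LinearIsometryEquiv.norm_map ContinuousLinearMap.adjoint T)) with hadjLdef
  have hadjapp : ∀ T, adjL T = ContinuousLinearMap.adjoint T := fun T => rfl
  have hB : HasDerivAt
      (fun t => ContinuousLinearMap.adjoint (fderiv ℝ (fun x' => h (x', t)) (γ t)))
      (adjL L) 0 := by
    have h1 := adjL.hasFDerivAt.comp_hasDerivAt 0 hA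
    exact h1
  have hB0 : ContinuousLinearMap.adjoint (fderiv ℝ (fun x' => h (x', 0)) (γ 0))
      = (1 : (EuclideanSpace ℝ (Fin n)) →L[ℝ] (EuclideanSpace ℝ (Fin n))) := by
    rw [hA0, ContinuousLinearMap.adjoint_id]; rfl
  -- inverse curve
  have hC : HasDerivAt
      (fun t => Ring.inverse
        (ContinuousLinearMap.adjoint (fderiv ℝ (fun x' => h (x', t)) (γ t))))
      (-(adjL L)) 0 := hasDerivAt_ring_inverse_comp hB hB0

  -- the inverse of toDual as a continuous linear map
  set tdm : (StrongDual ℝ (EuclideanSpace ℝ (Fin n))) →L[ℝ] (EuclideanSpace ℝ (Fin n)) :=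
    LinearMap.mkContinuous
      { toFun := fun f => (InnerProductSpace.toDual ℝ (EuclideanSpace ℝ (Fin n))).symm f
        map_add' := fun a b => map_add _ a b
        map_smul' := fun c a => by
          refine ext_inner_right ℝ fun v => ?_
          simp only [RingHom.id_apply, real_inner_smul_left,
            InnerProductSpace.toDual_symm_apply, ContinuousLinearMap.smul_apply, smul_eq_mul] }
      1 (fun f => by
        show ‖(InnerProductSpace.toDual ℝ (EuclideanSpace ℝ (Fin n))).symm f‖ ≤ 1 * ‖f‖
        rw [one_mul]
        exact le_of_eq (LinearIsometryEquiv.norm_map _ f)) with htdmdef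
  have htdm : ∀ f, tdm f = (InnerProductSpace.toDual ℝ (EuclideanSpace ℝ (Fin n))).symm f :=
    fun f => rfl
  -- second derivative of φ
  set Φ2 := fderiv ℝ (fderiv ℝ φ) x with hΦ2def
  have hΦ2 : HasFDerivAt (fderiv ℝ φ) Φ2 x :=
    (((hφ.contDiffAt).fderiv_right (le_refl 2)).differentiableAt one_ne_zero).hasFDerivAt
  have hφsym : ∀ u v : EuclideanSpace ℝ (Fin n), Φ2 u v = Φ2 v u := fun u v =>
    second_derivative_symmetric (fun y => ((hφ.differentiable two_ne_zero) y).hasFDerivAt) hΦ2 u v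
  set Dν := tdm.comp Φ2 with hDνdef
  have hν : HasFDerivAt (gradient φ) Dν x := by
    have h1 := tdm.hasFDerivAt.comp x hΦ2
    have h2 : gradient φ = fun y => tdm (fderiv ℝ φ y) := funext fun y => rfl
    rw [h2]; exact h1
  have hDνinner : ∀ u v' : EuclideanSpace ℝ (Fin n), ⟪Dν u, v'⟫ = Φ2 u v' := fun u v' => by
    show ⟪tdm (Φ2 u), v'⟫ = Φ2 u v'
    rw [htdm]
    exact InnerProductSpace.toDual_symm_apply
  have hDνsym : ∀ u v' : EuclideanSpace ℝ (Fin n), ⟪Dν u, v'⟫ = ⟪Dν v', u⟫ := fun u v' => by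
    rw [hDνinner, hDνinner, hφsym]
  have hνcurve : HasDerivAt (fun t => gradient φ (γ t)) (Dν (-(hdot x))) 0 :=
    HasFDerivAt.comp_hasDerivAt_of_eq 0 hν hγ' (by rw [hγ0'])
  -- the vector curve W
  have hν0norm : ‖gradient φ x‖ = 1 := hunit x hx
  have hν0ne : gradient φ x ≠ 0 := by
    intro h0; rw [h0, norm_zero] at hν0norm; exact one_ne_zero hν0norm.symm
  have hWd : HasDerivAt (fun t => w (γ t, t))
      (-(adjL L (gradient φ x)) + -(Dν (hdot x))) 0 := by
    have h1 := hC.clm_apply hνcurve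
    have h2 : (fun t => w (γ t, t)) = fun t => (Ring.inverse (ContinuousLinearMap.adjoint
        (fderiv ℝ (fun x' => h (x', t)) (γ t)))) (gradient φ (γ t)) :=
      funext fun t => hw (γ t, t)
    rw [h2]
    have h3 : (-(adjL L)) (gradient φ (γ 0)) + (Ring.inverse (ContinuousLinearMap.adjoint
        (fderiv ℝ (fun x' => h (x', 0)) (γ 0)))) (Dν (-(hdot x)))
        = -(adjL L (gradient φ x)) + -(Dν (hdot x)) := by
      rw [hB0, Ring.inverse_one, ContinuousLinearMap.one_apply, hγ0',
        ContinuousLinearMap.neg_apply, map_neg]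
    rw [← h3]
    exact h1
  have hW0 : w (γ 0, 0) = gradient φ x := by
    rw [hw (γ 0, 0)]
    show (Ring.inverse (ContinuousLinearMap.adjoint
      (fderiv ℝ (fun x' => h (x', 0)) (γ 0)))) (gradient φ (γ 0)) = gradient φ x
    rw [hB0, Ring.inverse_one, ContinuousLinearMap.one_apply, hγ0']
  -- gradient of σ
  have hσd : HasFDerivAt σ
      ((fderivInnerCLM ℝ (hdot x, gradient φ x)).comp (L.prod Dν)) x := by
    have h1 := hhd.inner ℝ hν
    have h2 : σ = fun y => ⟪hdot y, gradient φ y⟫ := funext hσ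
    rw [h2]; exact h1
  have hGval : gradient σ x = adjL L (gradient φ x) + Dν (hdot x) := by
    have hGrad : HasGradientAt σ
        (tdm ((fderivInnerCLM ℝ (hdot x, gradient φ x)).comp (L.prod Dν))) x := by
      rw [hasGradientAt_iff_hasFDerivAt]
      have h4 : InnerProductSpace.toDual ℝ (EuclideanSpace ℝ (Fin n))
          (tdm ((fderivInnerCLM ℝ (hdot x, gradient φ x)).comp (L.prod Dν)))
          = (fderivInnerCLM ℝ (hdot x, gradient φ x)).comp (L.prod Dν) := by
        rw [htdm]
        exact (InnerProductSpace.toDual ℝ (EuclideanSpace ℝ (Fin n))).apply_symm_apply _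
      rw [h4]; exact hσd
    rw [hGrad.gradient]
    refine ext_inner_right ℝ fun v => ?_
    rw [htdm, InnerProductSpace.toDual_symm_apply, ContinuousLinearMap.comp_apply,
      fderivInnerCLM_apply, inner_add_left, hadjapp, ContinuousLinearMap.adjoint_inner_left,
      hDνsym (hdot x) v]
    show ⟪hdot x, Dν v⟫ + ⟪L v, gradient φ x⟫ = ⟪gradient φ x, L v⟫ + ⟪Dν v, hdot x⟫
    rw [real_inner_comm (L v) (gradient φ x), real_inner_comm (hdot x) (Dν v)]
    exact add_comm _ _

  -- derivative of W is -∇σ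
  have hWd' : HasDerivAt (fun t => w (γ t, t)) (-(gradient σ x)) 0 := by
    have he : -(adjL L (gradient φ x)) + -(Dν (hdot x)) = -(gradient σ x) := by
      rw [hGval]; exact (neg_add _ _).symm
    rwa [he] at hWd
  -- the squared-norm curve
  set q : ℝ → ℝ := fun t => ⟪w (γ t, t), w (γ t, t)⟫ with hqdef
  have hq : HasDerivAt q
      (⟪gradient φ x, -(gradient σ x)⟫ + ⟪-(gradient σ x), gradient φ x⟫) 0 := by
    have h1 := hWd'.inner ℝ hWd'
    rwa [hW0] at h1
  have hq0 : q 0 = 1 := by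
    show ⟪w (γ 0, 0), w (γ 0, 0)⟫ = 1
    rw [hW0, real_inner_self_eq_norm_sq, hν0norm]; norm_num
  have hsqrtq0 : Real.sqrt (q 0) = 1 := by rw [hq0, Real.sqrt_one]
  have hsq : HasDerivAt (fun t => Real.sqrt (q t))
      (1 / (2 * Real.sqrt (q 0)) *
        (⟪gradient φ x, -(gradient σ x)⟫ + ⟪-(gradient σ x), gradient φ x⟫)) 0 :=
    (Real.hasDerivAt_sqrt (by rw [hq0]; norm_num)).comp 0 hq
  have hsqne : Real.sqrt (q 0) ≠ 0 := by rw [hsqrtq0]; norm_num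
  have hinvq : HasDerivAt (fun t => (Real.sqrt (q t))⁻¹)
      (-(1 / (2 * Real.sqrt (q 0)) *
        (⟪gradient φ x, -(gradient σ x)⟫ + ⟪-(gradient σ x), gradient φ x⟫)) /
        (Real.sqrt (q 0)) ^ 2) 0 := hsq.inv hsqne
  have hfinal0 := hinvq.smul hWd'
  rw [hW0] at hfinal0
  -- eventual equality of the curves
  have hcont : ContinuousAt (fun t => gradient φ (γ t)) 0 := hνcurve.continuousAt
  have hne : ∀ᶠ t in nhds (0:ℝ), gradient φ (γ t) ≠ 0 := by
    refine hcont.eventually_ne ?_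
    rw [hγ0']; exact hν0ne
  have hev : (fun t => N (g (x, t), t)) =ᶠ[nhds (0:ℝ)]
      (fun t => (Real.sqrt (q t))⁻¹ • w (γ t, t)) := by
    filter_upwards [hne] with t ht
    have h5 := hN (g (x, t), t) ht
    rw [h5, norm_eq_sqrt_real_inner]
  have hfinal := hfinal0.congr_of_eventuallyEq hev
  have hDeq : (Real.sqrt (q 0))⁻¹ • -(gradient σ x) +
      (-(1 / (2 * Real.sqrt (q 0)) *
        (⟪gradient φ x, -(gradient σ x)⟫ + ⟪-(gradient σ x), gradient φ x⟫)) /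
        (Real.sqrt (q 0)) ^ 2) • gradient φ x
      = -(gradient σ x - ⟪gradient σ x, gradient φ x⟫ • gradient φ x) := by
    rw [hsqrtq0, inner_neg_right, inner_neg_left,
      real_inner_comm (gradient φ x) (gradient σ x)]
    norm_num
    module
  rw [hDeq] at hfinal
  exact hfinal
end

section
/- Lemma 3.1 (variation of harmonic extensions with respect to the boundary): Let n ≥ 1 and let Ω ⊆ ℝⁿ be a bounded open set with frontier ∂Ω. Let ε > 0 and let h : ℝⁿ × (−ε, ε) → ℝⁿ be continuous with h(x, 0) = x for all x, such that for each x ∈ ℝⁿ the map t ↦ h(x, t) is differentiable at t = 0; set ḣ(x) = ∂_t h(x, 0). Let W ⊆ ℝⁿ × ℝ be an open set containing (closure Ω) × {0} and let U : ℝⁿ × ℝ → ℝ be C³ on W. Assume: (i) there is an open set V with Ω × {0} ⊆ V ⊆ W such that Δ_y U(y, t) = 0 for all (y, t) ∈ V, where Δ_y denotes the Laplacian in the first variable; (ii) U(h(x, t), t) = U(x, 0) for every x ∈ ∂Ω and every t ∈ (−ε, ε) with (h(x, t), t) ∈ W. Define v(x) = ∂_t U(x, 0) (partial derivative in the second variable)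 for x with (x, 0) ∈ W. Then: (a) v is harmonic on Ω, i.e. v is C² on Ω with Δv = 0 on Ω; and (b) v(x) = −⟨∇_y U(x, 0), ḣ(x)⟩ for every x ∈ ∂Ω, where ∇_y U(·, 0) denotes the gradient in the first variable. -/
open Set
open scoped RealInnerProductSpace Topology

/-- The Laplacian of `f : ℝⁿ → ℝ`, as the sum of the pure second derivatives
(the trace of the Hessian). -/
noncomputable def laplacian {n : ℕ} (f : EuclideanSpace ℝ (Fin n) → ℝ)
    (x : EuclideanSpace ℝ (Fin n)) : ℝ :=
  ∑ i : Fin n, iteratedFDeriv ℝ 2 f x ![EuclideanSpace.single i 1, EuclideanSpace.single i 1]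

set_option maxHeartbeats 1000000 in
/-- Lemma 3.1: variation of harmonic extensions with respect to the boundary.
If `U(·,t)` is harmonic near `Ω × {0}` and `U(h(x,t),t)` is constant in `t`
for `x ∈ ∂Ω`, then `v = ∂ₜU(·,0)` is harmonic on `Ω` and
`v = −⟪∇U(·,0), ḣ⟫` on `∂Ω`. -/
theorem variation_harmonic_extension
    {n : ℕ} (hn : 1 ≤ n)
    (Ω : Set (EuclideanSpace ℝ (Fin n)))
    (hΩopen : IsOpen Ω) (hΩbdd : Bornology.IsBounded Ω)
    (ε : ℝ) (hε : 0 < ε)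
    (h : EuclideanSpace ℝ (Fin n) × ℝ → EuclideanSpace ℝ (Fin n))
    (hhcont : ContinuousOn h (Set.univ ×ˢ Set.Ioo (-ε) ε))
    (hh0 : ∀ x, h (x, 0) = x)
    (hhdiff : ∀ x, DifferentiableAt ℝ (fun t => h (x, t)) 0)
    (hdot : EuclideanSpace ℝ (Fin n) → EuclideanSpace ℝ (Fin n))
    (hhdot : ∀ x, hdot x = deriv (fun t => h (x, t)) 0)
    (W : Set (EuclideanSpace ℝ (Fin n) × ℝ)) (hW : IsOpen W)
    (hWcl : closure Ω ×ˢ ({0} : Set ℝ) ⊆ W)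
    (U : EuclideanSpace ℝ (Fin n) × ℝ → ℝ) (hU : ContDiffOn ℝ 3 U W)
    (V : Set (EuclideanSpace ℝ (Fin n) × ℝ)) (hV : IsOpen V)
    (hΩV : Ω ×ˢ ({0} : Set ℝ) ⊆ V) (hVW : V ⊆ W)
    (hharm : ∀ p ∈ V, laplacian (fun y => U (y, p.2)) p.1 = 0)
    (hbdry : ∀ x ∈ frontier Ω, ∀ t ∈ Set.Ioo (-ε) ε, (h (x, t), t) ∈ W →
      U (h (x, t), t) = U (x, 0))
    (v : EuclideanSpace ℝ (Fin n) → ℝ)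
    (hv : ∀ x, v x = deriv (fun t => U (x, t)) 0) :
    (ContDiffOn ℝ 2 v Ω ∧ ∀ x ∈ Ω, laplacian v x = 0) ∧
    ∀ x ∈ frontier Ω, v x = -⟪gradient (fun y => U (y, 0)) x, hdot x⟫ := by
  classical
  have hWn : ∀ p ∈ W, W ∈ 𝓝 p := fun p hp => hW.mem_nhds hp
  set f := fderiv ℝ U with hfdef
  set g := fderiv ℝ f with hgdef
  have hU3 : ∀ p ∈ W, ContDiffAt ℝ 3 U p := fun p hp => hU.contDiffAt (hWn p hp)
  have hUdiff : ∀ p ∈ W, DifferentiableAt ℝ U p :=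
    fun p hp => (hU3 p hp).differentiableAt (by norm_num)
  have hf2 : ContDiffOn ℝ 2 f W := hU.fderiv_of_isOpen hW (by norm_num)
  have hfdiff : ∀ p ∈ W, DifferentiableAt ℝ f p :=
    fun p hp => (hf2.contDiffAt (hWn p hp)).differentiableAt two_ne_zero
  have hgdiff : ∀ p ∈ W, DifferentiableAt ℝ g p := by
    have hg1 : ContDiffOn ℝ 1 g W := hf2.fderiv_of_isOpen hW (by norm_num)
    exact fun p hp => (hg1.contDiffAt (hWn p hp)).differentiableAt one_ne_zero
  set ι := ContinuousLinearMap.inl ℝ (EuclideanSpace ℝ (Fin n)) ℝ with hι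
  set τ : EuclideanSpace ℝ (Fin n) × ℝ := (0, 1) with hτ
  have hclW : ∀ x ∈ closure Ω, (x, (0:ℝ)) ∈ W := fun x hx => hWcl (mk_mem_prod hx rfl)
  have hΩW : ∀ x ∈ Ω, (x, (0:ℝ)) ∈ W := fun x hx => hclW x (subset_closure hx)
  have hveq : ∀ x, (x, (0:ℝ)) ∈ W → v x = f (x, 0) τ := by
    intro x hxW
    have hc : HasDerivAt (fun t : ℝ => ((x, t) : EuclideanSpace ℝ (Fin n) × ℝ)) τ 0 :=
      (hasDerivAt_const (0:ℝ) x).prodMk (hasDerivAt_id 0)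
    have := (hUdiff _ hxW).hasFDerivAt.comp_hasDerivAt 0 hc
    rw [hv x]
    exact this.deriv
  -- derivative of q ↦ g q b c
  have hφ : ∀ (b c : EuclideanSpace ℝ (Fin n) × ℝ) (p), p ∈ W →
      HasFDerivAt (fun q => g q b c)
        ((ContinuousLinearMap.apply ℝ ℝ c).comp
          ((ContinuousLinearMap.apply ℝ ((EuclideanSpace ℝ (Fin n) × ℝ) →L[ℝ] ℝ) b).comp
            (fderiv ℝ g p))) p := by
    intro b c p hp
    have h1 := (ContinuousLinearMap.apply ℝ ((EuclideanSpace ℝ (Fin n) × ℝ) →L[ℝ] ℝ)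
      b).hasFDerivAt.comp p (f := g) (hgdiff p hp).hasFDerivAt
    exact (ContinuousLinearMap.apply ℝ ℝ c).hasFDerivAt.comp p h1
  have sym2 : ∀ p ∈ W, ∀ b c, g p b c = g p c b := fun p hp =>
    (hU3 p hp).isSymmSndFDerivAt (by norm_num)
  constructor
  · constructor
    · -- v is C² on Ω
      have hj : ContDiffOn ℝ 2 (fun x' : EuclideanSpace ℝ (Fin n) => (x', (0:ℝ))) Ω :=
        (contDiff_id.prodMk contDiff_const).contDiffOn
      have h1 : ContDiffOn ℝ 2 (fun x' => f (x', (0:ℝ))) Ω :=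
        hf2.comp hj (fun x' hx' => hΩW x' hx')
      have h2 : ContDiffOn ℝ 2 (fun x' => f (x', (0:ℝ)) τ) Ω :=
        h1.clm_apply contDiffOn_const
      exact h2.congr (fun x' hx' => hveq x' (hΩW x' hx'))
    · -- Laplacian of v vanishes on Ω
      intro x hx
      have hxV : ((x, (0:ℝ)) : EuclideanSpace ℝ (Fin n) × ℝ) ∈ V := hΩV (mk_mem_prod hx rfl)
      have hxW : ((x, (0:ℝ)) : EuclideanSpace ℝ (Fin n) × ℝ) ∈ W := hVW hxV
      set g' := fderiv ℝ g (x, (0:ℝ)) with hg'def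
      -- key: second derivative of v equals a third derivative of U
      have key3 : ∀ e : EuclideanSpace ℝ (Fin n),
          iteratedFDeriv ℝ 2 v x ![e, e] = g' (e, 0) (e, 0) τ := by
        intro e
        have hvA : v =ᶠ[𝓝 x] (fun x' => f (x', (0:ℝ)) τ) :=
          Filter.eventually_of_mem (hΩopen.mem_nhds hx) (fun x' hx' => hveq x' (hΩW x' hx'))
        have hSmem : {x' : EuclideanSpace ℝ (Fin n) | ((x', (0:ℝ)) :
            EuclideanSpace ℝ (Fin n) × ℝ) ∈ W} ∈ 𝓝 x :=
          (hW.preimage (Continuous.prodMk_left (0:ℝ))).mem_nhds hxW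
        have hA' : ∀ x' : EuclideanSpace ℝ (Fin n), ((x', (0:ℝ)) :
              EuclideanSpace ℝ (Fin n) × ℝ) ∈ W →
            HasFDerivAt (fun x'' => f (x'', (0:ℝ)) τ)
              ((ContinuousLinearMap.apply ℝ ℝ τ).comp ((g (x', 0)).comp ι)) x' :=
          fun x' hx' => (ContinuousLinearMap.apply ℝ ℝ τ).hasFDerivAt.comp x'
            ((hfdiff _ hx').hasFDerivAt.comp x' (hasFDerivAt_prodMk_left x' (0:ℝ)))
        let χ : ((EuclideanSpace ℝ (Fin n) × ℝ) →L[ℝ] ((EuclideanSpace ℝ (Fin n) × ℝ) →L[ℝ] ℝ))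
            →L[ℝ] (EuclideanSpace ℝ (Fin n) →L[ℝ] ℝ) :=
          (ContinuousLinearMap.compL ℝ (EuclideanSpace ℝ (Fin n))
              ((EuclideanSpace ℝ (Fin n) × ℝ) →L[ℝ] ℝ) ℝ
            (ContinuousLinearMap.apply ℝ ℝ τ)).comp
            ((ContinuousLinearMap.compL ℝ (EuclideanSpace ℝ (Fin n)) (EuclideanSpace ℝ (Fin n) × ℝ)
              ((EuclideanSpace ℝ (Fin n) × ℝ) →L[ℝ] ℝ)).flip ι)
        have hχ : ∀ M, χ M = (ContinuousLinearMap.apply ℝ ℝ τ).comp (M.comp ι) := by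
          intro M
          ext e
          simp [χ, ContinuousLinearMap.compL_apply]
        have hfvB : fderiv ℝ v =ᶠ[𝓝 x] (fun x' => χ (g (x', 0))) := by
          filter_upwards [hvA.fderiv (𝕜 := ℝ), hSmem] with x' e1 e2
          rw [e1, (hA' x' e2).fderiv, hχ]
        have hB' : HasFDerivAt (fun x' => χ (g (x', (0:ℝ)))) (χ.comp (g'.comp ι)) x := by
          have hin := (hgdiff _ hxW).hasFDerivAt.comp x (g := g) (f := fun x' => (x', (0:ℝ))) (hasFDerivAt_prodMk_left (𝕜 := ℝ) x (0:ℝ))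
          exact χ.hasFDerivAt.comp x hin
        have hdd : fderiv ℝ (fderiv ℝ v) x = χ.comp (g'.comp ι) := by
          rw [hfvB.fderiv_eq, hB'.fderiv]
        rw [iteratedFDeriv_two_apply, hdd]
        simp [χ, hι, ContinuousLinearMap.compL_apply]
      have sym23 : ∀ a b c, g' a b c = g' a c b := by
        intro a b c
        have hev : (fun q => g q b c) =ᶠ[𝓝 ((x, (0:ℝ)) : EuclideanSpace ℝ (Fin n) × ℝ)]
            (fun q => g q c b) :=
          Filter.eventually_of_mem (hWn _ hxW) (fun q hq => sym2 q hq b c)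
        have e3 := hev.fderiv_eq (𝕜 := ℝ)
        rw [(hφ b c _ hxW).fderiv, (hφ c b _ hxW).fderiv] at e3
        exact DFunLike.congr_fun e3 a
      have sym12 : ∀ a b c, g' a b c = g' b a c := by
        intro a b c
        have hs : IsSymmSndFDerivAt ℝ f (x, (0:ℝ)) :=
          (hf2.contDiffAt (hWn _ hxW)).isSymmSndFDerivAt (by simp)
        exact DFunLike.congr_fun (hs a b) c
      -- the slice Laplacian identity gives vanishing of a sum of second derivatives of f
      have hL0 : ∀ p ∈ V, ∑ i : Fin n,
          g p (EuclideanSpace.single i 1, (0:ℝ)) (EuclideanSpace.single i 1, (0:ℝ)) = 0 := by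
        intro p hp
        obtain ⟨y, t⟩ := p
        have h0 := hharm (y, t) hp
        simp only [laplacian] at h0
        have hla : ∑ i : Fin n,
            g (y, t) (EuclideanSpace.single i 1, (0:ℝ)) (EuclideanSpace.single i 1, (0:ℝ)) =
            ∑ i : Fin n, iteratedFDeriv ℝ 2 (fun y' => U (y', t)) y
              ![EuclideanSpace.single i 1, EuclideanSpace.single i 1] := by
          refine Finset.sum_congr rfl (fun i _ => ?_)
          have hytW : ((y, t) : EuclideanSpace ℝ (Fin n) × ℝ) ∈ W := hVW hp
          have hTmem : {y' : EuclideanSpace ℝ (Fin n) | ((y', t) :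
              EuclideanSpace ℝ (Fin n) × ℝ) ∈ W} ∈ 𝓝 y :=
            (hW.preimage (Continuous.prodMk_left t)).mem_nhds hytW
          have hsl : ∀ y' : EuclideanSpace ℝ (Fin n), ((y', t) :
                EuclideanSpace ℝ (Fin n) × ℝ) ∈ W →
              HasFDerivAt (fun y'' => U (y'', t)) ((f (y', t)).comp ι) y' :=
            fun y' hy' => (hUdiff _ hy').hasFDerivAt.comp y' (hasFDerivAt_prodMk_left y' t)
          set pre : ((EuclideanSpace ℝ (Fin n) × ℝ) →L[ℝ] ℝ) →L[ℝ]
              (EuclideanSpace ℝ (Fin n) →L[ℝ] ℝ) :=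
            (ContinuousLinearMap.compL ℝ (EuclideanSpace ℝ (Fin n))
              (EuclideanSpace ℝ (Fin n) × ℝ) ℝ).flip ι with hpre
          have hf1 : fderiv ℝ (fun y'' => U (y'', t)) =ᶠ[𝓝 y] (fun y' => pre (f (y', t))) :=
            Filter.eventually_of_mem hTmem (fun y' hy' => by
              rw [(hsl y' hy').fderiv]
              ext e
              simp [hpre, hι, ContinuousLinearMap.compL_apply])
          have hB : HasFDerivAt (fun y' => pre (f (y', t))) (pre.comp ((g (y, t)).comp ι)) y := by
            have hin := (hfdiff _ hytW).hasFDerivAt.comp y (f := fun y' => (y', t)) (hasFDerivAt_prodMk_left y t)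
            exact pre.hasFDerivAt.comp y hin
          rw [iteratedFDeriv_two_apply, hf1.fderiv_eq, hB.fderiv]
          simp [hpre, hι, ContinuousLinearMap.compL_apply]
        rw [hla]
        exact h0
      have hLev : (fun p => ∑ i : Fin n,
            g p (EuclideanSpace.single i 1, (0:ℝ)) (EuclideanSpace.single i 1, (0:ℝ)))
          =ᶠ[𝓝 ((x, (0:ℝ)) : EuclideanSpace ℝ (Fin n) × ℝ)] (fun _ => (0:ℝ)) :=
        Filter.eventually_of_mem (hV.mem_nhds hxV) hL0
      have hz : HasFDerivAt (fun p => ∑ i : Fin n,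
            g p (EuclideanSpace.single i 1, (0:ℝ)) (EuclideanSpace.single i 1, (0:ℝ)))
          (0 : (EuclideanSpace ℝ (Fin n) × ℝ) →L[ℝ] ℝ) (x, (0:ℝ)) :=
        (hasFDerivAt_const (0:ℝ) _).congr_of_eventuallyEq hLev
      have hs : HasFDerivAt (fun p => ∑ i : Fin n,
            g p (EuclideanSpace.single i 1, (0:ℝ)) (EuclideanSpace.single i 1, (0:ℝ)))
          (∑ i : Fin n, (ContinuousLinearMap.apply ℝ ℝ (EuclideanSpace.single i 1, (0:ℝ))).comp
            ((ContinuousLinearMap.apply ℝ ((EuclideanSpace ℝ (Fin n) × ℝ) →L[ℝ] ℝ)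
              (EuclideanSpace.single i 1, (0:ℝ))).comp g')) (x, (0:ℝ)) :=
        HasFDerivAt.fun_sum (fun i _ => hφ _ _ _ hxW)
      have h00 := hs.unique hz
      have hsum : ∑ i : Fin n,
          g' τ (EuclideanSpace.single i 1, (0:ℝ)) (EuclideanSpace.single i 1, (0:ℝ)) = 0 := by
        have := DFunLike.congr_fun h00 τ
        simpa [ContinuousLinearMap.sum_apply] using this
      have : laplacian v x = ∑ i : Fin n,
          g' τ (EuclideanSpace.single i 1, (0:ℝ)) (EuclideanSpace.single i 1, (0:ℝ)) := by
        simp only [laplacian]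
        refine Finset.sum_congr rfl (fun i _ => ?_)
        exact (key3 _).trans (((sym23 _ _ _).trans (sym12 _ _ _)))
      rw [this, hsum]
  · -- boundary identity
    intro x hx
    have hxcl : x ∈ closure Ω := frontier_subset_closure hx
    have hxW : ((x, (0:ℝ)) : EuclideanSpace ℝ (Fin n) × ℝ) ∈ W := hclW x hxcl
    have hγ : HasDerivAt (fun t : ℝ => ((h (x, t), t) : EuclideanSpace ℝ (Fin n) × ℝ))
        (hdot x, 1) 0 := by
      have h1 : HasDerivAt (fun t => h (x, t)) (hdot x) 0 := by
        rw [hhdot]; exact (hhdiff x).hasDerivAt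
      exact h1.prodMk (hasDerivAt_id 0)
    have hγ0 : ((h (x, 0), (0:ℝ)) : EuclideanSpace ℝ (Fin n) × ℝ) = (x, 0) := by rw [hh0]
    have hevW : ∀ᶠ t : ℝ in 𝓝 0, ((h (x, t), t) : EuclideanSpace ℝ (Fin n) × ℝ) ∈ W := by
      have := hγ.continuousAt.eventually_mem (by rw [hγ0]; exact hWn _ hxW)
      exact this
    have hevI : ∀ᶠ t : ℝ in 𝓝 0, t ∈ Set.Ioo (-ε) ε :=
      Filter.eventually_of_mem (isOpen_Ioo.mem_nhds ⟨by linarith, hε⟩) (fun t ht => ht)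
    have hconst : (fun t => U (h (x, t), t)) =ᶠ[𝓝 (0:ℝ)] (fun _ => U (x, 0)) := by
      filter_upwards [hevW, hevI] with t h1 h2
      exact hbdry x hx t h2 h1
    have hUγ : HasDerivAt (fun t => U (h (x, t), t)) (f (x, 0) (hdot x, 1)) 0 :=
      (hUdiff _ hxW).hasFDerivAt.comp_hasDerivAt_of_eq 0 hγ (by rw [hγ0])
    have hzero : HasDerivAt (fun t => U (h (x, t), t)) 0 0 :=
      (hasDerivAt_const 0 (U (x, 0))).congr_of_eventuallyEq hconst
    have huniq : f (x, 0) (hdot x, 1) = 0 := hUγ.unique hzero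
    have hslice : HasFDerivAt (fun y => U (y, (0:ℝ))) ((f (x, 0)).comp ι) x :=
      (hUdiff _ hxW).hasFDerivAt.comp x (hasFDerivAt_prodMk_left x (0:ℝ))
    have hgrad : ⟪gradient (fun y => U (y, (0:ℝ))) x, hdot x⟫ = f (x, 0) (hdot x, 0) := by
      rw [gradient, hslice.fderiv]
      rw [InnerProductSpace.toDual_symm_apply]
      simp [hι]
    have hvx : v x = f (x, 0) τ := hveq x hxW
    have hsplit : f (x, 0) (hdot x, 1) = f (x, 0) (hdot x, 0) + f (x, 0) τ := by
      rw [← map_add]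
      congr 1
      simp [hτ, Prod.ext_iff]
    rw [hvx, hgrad]
    rw [hsplit] at huniq
    linarith
end
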